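/- Fix x ∈ ℝⁿ, a unit vector u ∈ ℝⁿ, and p ∈ (0,1). For every measurable function f : ℝⁿ → [0,1] satisfying E_{X ~ N(0, Iₙ)}[f(x + X)] = p, one has E_{X ~ N(0, Iₙ)}[f(x + X) · (X · u)] ≤ (1/√(2π)) · exp(-(Φ⁻¹(p))²/2); moreover this bound is attained by the half-space indicator h(z) = 1{(z - x) · u ≥ -Φ⁻¹(p)}. -/

import Mathlib

open MeasureTheory Real Set
open scoped ENNReal NNReal

/-- The standard `n`-dimensional Gaussian measure `N(0, Iₙ)`, with density
`(2π)^{-n/2} exp(-‖t‖²/2)` with respect to Lebesgue measure. -/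
noncomputable def stdGaussian (n : ℕ) : Measure (EuclideanSpace ℝ (Fin n)) :=
  volume.withDensity fun t =>
    ENNReal.ofReal ((2 * π) ^ (-(n : ℝ) / 2) * Real.exp (-‖t‖ ^ 2 / 2))

/-- The standard Gaussian CDF `Φ(a) = (1/√(2π)) ∫_{-∞}^a exp(-s²/2) ds`. -/
noncomputable def stdGaussianCDF (a : ℝ) : ℝ :=
  (Real.sqrt (2 * π))⁻¹ * ∫ s in Set.Iic a, Real.exp (-s ^ 2 / 2)

/-- The inverse `Φ⁻¹ : (0,1) → ℝ` of the standard Gaussian CDF. -/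
noncomputable def stdGaussianCDFInv : ℝ → ℝ :=
  Function.invFun stdGaussianCDF


noncomputable def gphi : ℝ → ℝ := fun s => (Real.sqrt (2*π))⁻¹ * Real.exp (-s^2/2)

lemma gphi_eq : gphi = fun s => (Real.sqrt (2*π))⁻¹ * Real.exp (-(1/2) * s^2) := by
  funext s; simp only [gphi]; ring_nf

lemma gphi_nonneg (s : ℝ) : 0 ≤ gphi s := by
  unfold gphi; positivity

lemma gphi_meas : Measurable gphi := by
  unfold gphi; fun_prop

lemma gphi_integrable : Integrable gphi := by
  rw [gphi_eq]
  exact (integrable_exp_neg_mul_sq (by norm_num)).const_mul _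

lemma gphi_integral : ∫ s, gphi s = 1 := by
  rw [gphi_eq]
  rw [integral_const_mul, integral_gaussian]
  rw [show π / (1/2) = 2 * π by ring]
  rw [inv_mul_cancel₀ (by positivity)]

lemma id_mul_exp_integrable : Integrable (fun s : ℝ => s * Real.exp (-s^2/2)) := by
  have h := integrable_rpow_mul_exp_neg_mul_sq (b := 1/2) (by norm_num) (s := 1) (by norm_num)
  simp only [Real.rpow_one] at h
  convert h using 2 with s
  ring_nf

lemma id_mul_gphi_integrable : Integrable (fun s : ℝ => s * gphi s) := by
  have : (fun s : ℝ => s * gphi s) = fun s => (Real.sqrt (2*π))⁻¹ * (s * Real.exp (-s^2/2)) := by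
    funext s; unfold gphi; ring
  rw [this]
  exact id_mul_exp_integrable.const_mul _

lemma integral_Ioi_id_mul_exp (a : ℝ) :
    ∫ s in Ioi a, s * Real.exp (-s^2/2) = Real.exp (-a^2/2) := by
  have hderiv : ∀ s ∈ Ici a, HasDerivAt (fun y : ℝ => -Real.exp (-y^2/2))
      (s * Real.exp (-s^2/2)) s := by
    intro s _
    have h1 : HasDerivAt (fun y : ℝ => -y^2/2) (-s) s := by
      have := ((hasDerivAt_pow 2 s).neg).div_const 2
      simpa using this.congr_deriv (by ring)
    have := (h1.exp).neg
    exact this.congr_deriv (by ring)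
  have htend : Filter.Tendsto (fun y : ℝ => -Real.exp (-y^2/2)) Filter.atTop (nhds 0) := by
    rw [show (0:ℝ) = -0 by ring]
    apply Filter.Tendsto.neg
    apply Real.tendsto_exp_atBot.comp
    have h2 : Filter.Tendsto (fun y : ℝ => y^2) Filter.atTop Filter.atTop :=
      Filter.tendsto_pow_atTop two_ne_zero
    have h3 := (Filter.tendsto_neg_atTop_atBot.comp h2).atBot_div_const (show (0:ℝ) < 2 by norm_num)
    exact h3.congr (fun y => rfl)
  have hint : IntegrableOn (fun s : ℝ => s * Real.exp (-s^2/2)) (Ioi a) :=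
    id_mul_exp_integrable.integrableOn
  rw [integral_Ioi_of_hasDerivAt_of_tendsto' hderiv hint htend]
  simp [neg_pow]



lemma ge_integrable : Integrable (fun s : ℝ => Real.exp (-s^2/2)) := by
  have h := integrable_exp_neg_mul_sq (b := 1/2) (by norm_num)
  convert h using 2 with s; ring_nf

lemma ge_total : ∫ s : ℝ, Real.exp (-s^2/2) = Real.sqrt (2*π) := by
  have h := integral_gaussian (1/2)
  rw [show π / (1/2) = 2 * π by ring] at h
  rw [← h]; congr 1 with s; ring_nf

lemma F_mono : Monotone (fun a => ∫ s in Iic a, Real.exp (-s^2/2)) := by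
  intro a b hab
  apply setIntegral_mono_set ge_integrable.integrableOn
  · exact Filter.Eventually.of_forall fun s => (Real.exp_pos _).le
  · exact (Iic_subset_Iic.mpr hab).eventuallyLE

lemma F_cont : Continuous (fun a => ∫ s in Iic a, Real.exp (-s^2/2)) := by
  apply LipschitzWith.continuous (K := 1)
  apply LipschitzWith.of_dist_le_mul
  intro a b
  rw [Real.dist_eq, Real.dist_eq, intervalIntegral.integral_Iic_sub_Iic ge_integrable.integrableOn
    ge_integrable.integrableOn]
  rw [← Real.norm_eq_abs]
  have := intervalIntegral.norm_integral_le_of_norm_le_const (C := 1)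
    (f := fun s : ℝ => Real.exp (-s^2/2)) (a := b) (b := a) ?_
  · simpa [abs_sub_comm] using this
  · intro s _
    rw [Real.norm_eq_abs, abs_of_pos (Real.exp_pos _)]
    exact Real.exp_le_one_iff.mpr (by nlinarith [sq_nonneg s])

lemma F_atTop : Filter.Tendsto (fun a => ∫ s in Iic a, Real.exp (-s^2/2))
    Filter.atTop (nhds (Real.sqrt (2*π))) := by
  rw [← ge_total]
  exact (aecover_Iic Filter.tendsto_id).integral_tendsto_of_countably_generated ge_integrable

lemma F_atBot : Filter.Tendsto (fun a => ∫ s in Iic a, Real.exp (-s^2/2))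
    Filter.atBot (nhds 0) := by
  have h1 : Filter.Tendsto (fun a => ∫ s in Ioi a, Real.exp (-s^2/2))
      Filter.atBot (nhds (∫ s : ℝ, Real.exp (-s^2/2))) :=
    (aecover_Ioi Filter.tendsto_id).integral_tendsto_of_countably_generated ge_integrable
  have h2 : ∀ a : ℝ, (∫ s in Iic a, Real.exp (-s^2/2)) =
      (∫ s : ℝ, Real.exp (-s^2/2)) - ∫ s in Ioi a, Real.exp (-s^2/2) := by
    intro a
    rw [← intervalIntegral.integral_Iic_add_Ioi ge_integrable.integrableOn ge_integrable.integrableOn]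
    ring
  simp only [h2]
  have h3 := (tendsto_const_nhds (α := ℝ) (f := Filter.atBot)
    (x := ∫ s : ℝ, Real.exp (-s^2/2))).sub h1
  rw [sub_self] at h3
  exact h3

lemma stdGaussianCDF_surj {p : ℝ} (hp : p ∈ Ioo (0:ℝ) 1) : ∃ c, stdGaussianCDF c = p := by
  set F := fun a => ∫ s in Iic a, Real.exp (-s^2/2) with hF
  have hsq : (0:ℝ) < Real.sqrt (2*π) := Real.sqrt_pos.mpr (by positivity)
  set q := Real.sqrt (2*π) * p with hq
  have hq0 : 0 < q := mul_pos hsq hp.1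
  have hq1 : q < Real.sqrt (2*π) := by
    calc q < Real.sqrt (2*π) * 1 := by
            exact mul_lt_mul_of_pos_left hp.2 hsq
      _ = _ := mul_one _
  obtain ⟨a, ha⟩ := (F_atBot.eventually_lt_const hq0).exists
  obtain ⟨b, hb⟩ := (F_atTop.eventually_const_lt hq1).exists
  have hab : a ≤ b := by
    by_contra h
    exact absurd (F_mono (le_of_not_ge h)) (by simp only [not_le]; exact ha.trans hb)
  obtain ⟨c, _, hc⟩ := intermediate_value_Icc hab F_cont.continuousOn
    ⟨ha.le, hb.le⟩
  refine ⟨c, ?_⟩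
  have hc' : (∫ s in Iic c, Real.exp (-s^2/2)) = q := hc
  rw [stdGaussianCDF, hc', hq]
  rw [← mul_assoc, inv_mul_cancel₀ hsq.ne', one_mul]
lemma stdGaussianCDF_inv_eq {p : ℝ} (hp : p ∈ Ioo (0:ℝ) 1) :
    stdGaussianCDF (stdGaussianCDFInv p) = p :=
  Function.invFun_eq (stdGaussianCDF_surj hp)



noncomputable def gdens (n : ℕ) (t : EuclideanSpace ℝ (Fin n)) : ℝ :=
  (2 * π) ^ (-(n : ℝ) / 2) * Real.exp (-‖t‖ ^ 2 / 2)

lemma gdens_pos (n : ℕ) (t : EuclideanSpace ℝ (Fin n)) : 0 < gdens n t := by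
  unfold gdens
  have : (0:ℝ) < 2 * π := by positivity
  positivity

lemma gdens_meas (n : ℕ) : Measurable (gdens n) := by
  unfold gdens; fun_prop

lemma stdGaussian_eq (n : ℕ) :
    stdGaussian n = volume.withDensity (fun t => ((gdens n t).toNNReal : ℝ≥0∞)) := rfl

lemma inv_sqrt_pow (n : ℕ) : ((Real.sqrt (2*π))⁻¹) ^ n = (2*π) ^ (-(n:ℝ)/2) := by
  have h2 : (0:ℝ) ≤ 2*π := by positivity
  rw [Real.sqrt_eq_rpow, ← Real.rpow_neg h2, ← Real.rpow_natCast ((2*π) ^ (-(1/2):ℝ)) n,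
    ← Real.rpow_mul h2]
  congr 1
  ring

lemma prod_gphi (n : ℕ) (x : Fin n → ℝ) :
    ∏ i, gphi (x i) = (2*π) ^ (-(n:ℝ)/2) * Real.exp (-(∑ i, (x i)^2)/2) := by
  unfold gphi
  rw [Finset.prod_mul_distrib, Finset.prod_const, ← Real.exp_sum]
  congr 1
  · rw [Finset.card_univ, Fintype.card_fin, inv_sqrt_pow]
  · congr 1
    simp only [neg_div, Finset.sum_neg_distrib, ← Finset.sum_div]

lemma exists_iso (n : ℕ) (u : EuclideanSpace ℝ (Fin n)) (hu : ‖u‖ = 1) (hn : 0 < n) :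
    ∃ Ψ : EuclideanSpace ℝ (Fin n) ≃ᵐ (Fin n → ℝ), MeasurePreserving Ψ volume volume ∧
      ∃ i₀ : Fin n, (∀ t, Ψ t i₀ = (inner ℝ t u : ℝ)) ∧
        (∀ t, ∑ i, (Ψ t i)^2 = ‖t‖^2) := by
  set i₀ : Fin n := ⟨0, hn⟩ with hi₀
  have hcard : Module.finrank ℝ (EuclideanSpace ℝ (Fin n)) = Fintype.card (Fin n) := by
    simp [finrank_euclideanSpace_fin]
  have horth : Orthonormal ℝ (Set.restrict {i₀} (fun _ : Fin n => u)) := by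
    constructor
    · intro i; exact hu
    · intro i j hij
      exact absurd (Subsingleton.elim i j) hij
  obtain ⟨b, hb⟩ := horth.exists_orthonormalBasis_extension_of_card_eq hcard
  have hbu : b i₀ = u := hb i₀ rfl
  refine ⟨(b.repr.toHomeomorph.toMeasurableEquiv).trans ((MeasurableEquiv.toLp 2 (Fin n → ℝ)).symm),
    ?_, i₀, ?_, ?_⟩
  · exact (EuclideanSpace.volume_preserving_symm_measurableEquiv_toLp (Fin n)).comp
      b.measurePreserving_repr
  · intro t
    have h1 : (b.repr.toHomeomorph.toMeasurableEquiv.trans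
        ((MeasurableEquiv.toLp 2 (Fin n → ℝ)).symm)) t i₀ = b.repr t i₀ := rfl
    rw [h1, OrthonormalBasis.repr_apply_apply, hbu, real_inner_comm]
  · intro t
    have h1 : ∀ i, (b.repr.toHomeomorph.toMeasurableEquiv.trans
        ((MeasurableEquiv.toLp 2 (Fin n → ℝ)).symm)) t i = b.repr t i := fun i => rfl
    simp only [h1]
    have h2 : ‖b.repr t‖ ^ 2 = ‖t‖ ^ 2 := by rw [LinearIsometryEquiv.norm_map]
    rw [← h2, EuclideanSpace.norm_eq, Real.sq_sqrt (by positivity)]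
    simp [sq_abs]

lemma npos (n : ℕ) (u : EuclideanSpace ℝ (Fin n)) (hu : ‖u‖ = 1) : 0 < n := by
  rcases Nat.eq_zero_or_pos n with h | h
  · subst h
    have : u = 0 := by ext i; exact i.elim0
    rw [this] at hu
    simp at hu
  · exact h

lemma hpt_aux (n : ℕ) (u : EuclideanSpace ℝ (Fin n)) (g : ℝ → ℝ)
    (Ψ : EuclideanSpace ℝ (Fin n) ≃ᵐ (Fin n → ℝ)) (i₀ : Fin n)
    (hinner : ∀ t, Ψ t i₀ = (inner ℝ t u : ℝ)) (hsum : ∀ t, ∑ i, (Ψ t i)^2 = ‖t‖^2) (t) :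
    (gdens n t).toNNReal • g (inner ℝ t u : ℝ)
      = (fun x : Fin n → ℝ => ∏ i, ((if i = i₀ then g (x i) else 1) * gphi (x i))) (Ψ t) := by
  simp only [NNReal.smul_def, smul_eq_mul, Real.coe_toNNReal _ (gdens_pos n t).le]
  rw [Finset.prod_mul_distrib, Finset.prod_ite_eq' Finset.univ i₀ (fun i => g (Ψ t i)),
    prod_gphi n (Ψ t), hsum t, hinner t]
  simp only [Finset.mem_univ, if_true]
  unfold gdens
  ring

lemma key_integral (n : ℕ) (u : EuclideanSpace ℝ (Fin n)) (hu : ‖u‖ = 1) (g : ℝ → ℝ) :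
    ∫ t, g (inner ℝ t u : ℝ) ∂(stdGaussian n) = ∫ s, g s * gphi s := by
  obtain ⟨Ψ, hΨ, i₀, hinner, hsum⟩ := exists_iso n u hu (npos n u hu)
  rw [stdGaussian_eq, integral_withDensity_eq_integral_smul (gdens_meas n).real_toNNReal]
  simp only [hpt_aux n u g Ψ i₀ hinner hsum]
  refine Eq.trans (hΨ.integral_comp'
    (fun y : Fin n → ℝ => ∏ i, ((if i = i₀ then g (y i) else 1) * gphi (y i)))) ?_
  rw [volume_pi, MeasureTheory.integral_fintype_prod_eq_prod (𝕜 := ℝ)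
    (fun i v => (if i = i₀ then g v else 1) * gphi v)]
  rw [Finset.prod_eq_single i₀ ?h1 ?h2]
  · simp
  case h1 =>
    intro i _ hi
    simp only [if_neg hi, one_mul]
    exact gphi_integral
  case h2 => intro h; exact absurd (Finset.mem_univ i₀) h

lemma key_integrable (n : ℕ) (u : EuclideanSpace ℝ (Fin n)) (hu : ‖u‖ = 1) (g : ℝ → ℝ)
    (hg : Integrable (fun s => g s * gphi s)) (hgm : Measurable g) :
    Integrable (fun t => g (inner ℝ t u : ℝ)) (stdGaussian n) := by
  obtain ⟨Ψ, hΨ, i₀, hinner, hsum⟩ := exists_iso n u hu (npos n u hu)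
  rw [stdGaussian_eq, integrable_withDensity_iff_integrable_smul (gdens_meas n).real_toNNReal]
  simp only [hpt_aux n u g Ψ i₀ hinner hsum]
  have hP : Integrable (fun y : Fin n → ℝ =>
      ∏ i, ((if i = i₀ then g (y i) else 1) * gphi (y i))) volume := by
    apply Integrable.fintype_prod (f := fun i v => (if i = i₀ then g v else 1) * gphi v)
    intro i
    by_cases hi : i = i₀
    · subst hi; simpa using hg
    · simp only [if_neg hi, one_mul]; exact gphi_integrable
  exact (hΨ.integrable_comp_emb Ψ.measurableEmbedding).mpr hP

lemma ind_meas (c : ℝ) : Measurable (fun s : ℝ => if -c ≤ s then (1:ℝ) else 0) := by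
  have : (fun s : ℝ => if -c ≤ s then (1:ℝ) else 0)
      = Set.indicator (Ici (-c)) (fun _ => (1:ℝ)) := by
    funext s; simp [Set.indicator, Set.mem_Ici]
  rw [this]
  exact measurable_const.indicator measurableSet_Ici

lemma ind_gphi_integrable (c : ℝ) :
    Integrable (fun s : ℝ => (if -c ≤ s then (1:ℝ) else 0) * gphi s) :=
  gphi_integrable.bdd_mul (ind_meas c).aestronglyMeasurable
    (c := 1) (Filter.Eventually.of_forall fun s => by dsimp; split <;> simp)

lemma ind_id_gphi_integrable (c : ℝ) :
    Integrable (fun s : ℝ => ((if -c ≤ s then (1:ℝ) else 0) * s) * gphi s) := by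
  have : (fun s : ℝ => ((if -c ≤ s then (1:ℝ) else 0) * s) * gphi s)
      = fun s => (if -c ≤ s then (1:ℝ) else 0) * (s * gphi s) := by funext s; ring
  rw [this]
  exact id_mul_gphi_integrable.bdd_mul (ind_meas c).aestronglyMeasurable
    (c := 1) (Filter.Eventually.of_forall fun s => by dsimp; split <;> simp)

lemma ind_gphi_integral (c : ℝ) :
    ∫ s, (if -c ≤ s then (1:ℝ) else 0) * gphi s = stdGaussianCDF c := by
  have h1 : (fun s : ℝ => (if -c ≤ s then (1:ℝ) else 0) * gphi s)
      = Set.indicator (Ici (-c)) gphi := by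
    funext s; simp [Set.indicator, Set.mem_Ici, ite_mul]
  rw [h1, integral_indicator measurableSet_Ici, integral_Ici_eq_integral_Ioi,
    ← integral_comp_neg_Iic]
  have h2 : ∀ s : ℝ, gphi (-s) = gphi s := by
    intro s; unfold gphi; rw [neg_pow]; norm_num
  simp only [h2]
  unfold gphi stdGaussianCDF
  rw [integral_const_mul]

lemma ind_id_gphi_integral (c : ℝ) :
    ∫ s, ((if -c ≤ s then (1:ℝ) else 0) * s) * gphi s
      = (Real.sqrt (2*π))⁻¹ * Real.exp (-c^2/2) := by
  have h1 : (fun s : ℝ => ((if -c ≤ s then (1:ℝ) else 0) * s) * gphi s)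
      = Set.indicator (Ici (-c)) (fun s => (Real.sqrt (2*π))⁻¹ * (s * Real.exp (-s^2/2))) := by
    funext s
    simp only [Set.indicator, Set.mem_Ici, ite_mul, one_mul, zero_mul]
    unfold gphi
    split <;> ring
  rw [h1, integral_indicator measurableSet_Ici, integral_Ici_eq_integral_Ioi,
    integral_const_mul, integral_Ioi_id_mul_exp, neg_pow]
  norm_num


/-- fix `x`, a unit vector `u`, and `p ∈ (0,1)`. Every measurable
`f : ℝⁿ → [0,1]` with `E_{X ~ N(0,Iₙ)}[f(x + X)] = p` satisfies
`E[f(x + X) (X ⬝ u)] ≤ (1/√(2π)) exp(-(Φ⁻¹ p)²/2)`, and the bound is attained by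
the half-space indicator `h(z) = 1{(z - x) ⬝ u ≥ -Φ⁻¹(p)}`. -/
theorem halfspace_maximizes_directional_mass (n : ℕ)
    (x u : EuclideanSpace ℝ (Fin n)) (hu : ‖u‖ = 1)
    (p : ℝ) (hp : p ∈ Set.Ioo (0 : ℝ) 1) :
    (∀ f : EuclideanSpace ℝ (Fin n) → ℝ, Measurable f →
      (∀ t, f t ∈ Set.Icc (0 : ℝ) 1) →
      (∫ t, f (x + t) ∂(stdGaussian n)) = p →
      (∫ t, f (x + t) * (inner ℝ t u : ℝ) ∂(stdGaussian n)) ≤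
        (Real.sqrt (2 * π))⁻¹ * Real.exp (-(stdGaussianCDFInv p) ^ 2 / 2)) ∧
    (∫ t, (if -(stdGaussianCDFInv p) ≤ (inner ℝ ((x + t) - x) u : ℝ) then (1 : ℝ) else 0)
        * (inner ℝ t u : ℝ) ∂(stdGaussian n)) =
      (Real.sqrt (2 * π))⁻¹ * Real.exp (-(stdGaussianCDFInv p) ^ 2 / 2) := by

  set c : ℝ := stdGaussianCDFInv p with hcdef
  have hc : stdGaussianCDF c = p := stdGaussianCDF_inv_eq hp
  -- the half-space integrand in one dimension
  set h : ℝ → ℝ := fun s => if -c ≤ s then (1:ℝ) else 0 with hhdef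
  -- probability measure
  have hprob : IsProbabilityMeasure (stdGaussian n) := by
    have h1 := key_integral n u hu (fun _ => (1:ℝ))
    simp only [one_mul] at h1
    rw [gphi_integral] at h1
    have h2 : ((stdGaussian n) Set.univ).toReal = 1 := by
      simpa [integral_const, smul_eq_mul, Measure.real] using h1
    exact ⟨(ENNReal.toReal_eq_one_iff _).mp h2⟩
  -- value of the half-space mass
  have key1 : ∫ t, h (inner ℝ t u : ℝ) ∂(stdGaussian n) = p := by
    rw [key_integral n u hu h]
    rw [show (fun s => h s * gphi s) = fun s : ℝ => (if -c ≤ s then (1:ℝ) else 0) * gphi s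
      from rfl]
    rw [ind_gphi_integral c, hc]
  -- value of the half-space directional mass
  have key2 : ∫ t, h (inner ℝ t u : ℝ) * (inner ℝ t u : ℝ) ∂(stdGaussian n)
      = (Real.sqrt (2*π))⁻¹ * Real.exp (-c^2/2) := by
    have := key_integral n u hu (fun s => h s * s)
    rw [this]
    exact ind_id_gphi_integral c
  have IntL : Integrable (fun t => (inner ℝ t u : ℝ)) (stdGaussian n) :=
    key_integrable n u hu (fun s => s) id_mul_gphi_integrable measurable_id
  have IntHL : Integrable (fun t => h (inner ℝ t u : ℝ) * (inner ℝ t u : ℝ)) (stdGaussian n) :=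
    key_integrable n u hu (fun s => h s * s) (ind_id_gphi_integrable c)
      ((ind_meas c).mul measurable_id)
  have IntH : Integrable (fun t => h (inner ℝ t u : ℝ)) (stdGaussian n) :=
    key_integrable n u hu h (ind_gphi_integrable c) (ind_meas c)
  constructor
  · intro f hfm hf01 hfp
    set F : EuclideanSpace ℝ (Fin n) → ℝ := fun t => f (x + t) with hFdef
    have hFm : Measurable F := hfm.comp (measurable_id.const_add x)
    have hFb : ∀ t, ‖F t‖ ≤ 1 := by
      intro t
      rw [Real.norm_eq_abs, abs_le]
      exact ⟨by linarith [(hf01 (x + t)).1], (hf01 (x + t)).2⟩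
    have IntF : Integrable F (stdGaussian n) := by
      apply Integrable.mono' (integrable_const (1:ℝ)) hFm.aestronglyMeasurable
      exact Filter.Eventually.of_forall hFb
    have IntFL : Integrable (fun t => F t * (inner ℝ t u : ℝ)) (stdGaussian n) :=
      IntL.bdd_mul (c := 1) hFm.aestronglyMeasurable (Filter.Eventually.of_forall hFb)
    have pt : ∀ t, 0 ≤ (h (inner ℝ t u : ℝ) - F t) * ((inner ℝ t u : ℝ) + c) := by
      intro t
      by_cases hca : -c ≤ (inner ℝ t u : ℝ)
      · have h1 : h (inner ℝ t u : ℝ) = 1 := if_pos hca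
        rw [h1]
        apply mul_nonneg
        · linarith [(hf01 (x + t)).2]
        · linarith
      · have h1 : h (inner ℝ t u : ℝ) = 0 := if_neg hca
        rw [h1]
        push_neg at hca
        nlinarith [mul_nonneg (hf01 (x + t)).1
          (show (0:ℝ) ≤ -((inner ℝ t u : ℝ) + c) by linarith)]
    have hnn : 0 ≤ ∫ t, (h (inner ℝ t u : ℝ) - F t) * ((inner ℝ t u : ℝ) + c)
        ∂(stdGaussian n) := integral_nonneg pt
    have hexp : (fun t => (h (inner ℝ t u : ℝ) - F t) * ((inner ℝ t u : ℝ) + c))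
        = fun t => (h (inner ℝ t u : ℝ) * (inner ℝ t u : ℝ) - F t * (inner ℝ t u : ℝ))
          + (c * h (inner ℝ t u : ℝ) - c * F t) := by
      funext t; ring
    rw [hexp] at hnn
    have I1 : Integrable (fun t => h (inner ℝ t u : ℝ) * (inner ℝ t u : ℝ)
        - F t * (inner ℝ t u : ℝ)) (stdGaussian n) := IntHL.sub IntFL
    have I2 : Integrable (fun t => c * h (inner ℝ t u : ℝ) - c * F t) (stdGaussian n) :=
      (IntH.const_mul c).sub (IntF.const_mul c)
    rw [integral_add I1 I2,
      integral_sub IntHL IntFL, integral_sub (IntH.const_mul c) (IntF.const_mul c),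
      integral_const_mul, integral_const_mul, key1, key2, hfp] at hnn
    have : (∫ t, F t * (inner ℝ t u : ℝ) ∂(stdGaussian n))
        ≤ (Real.sqrt (2*π))⁻¹ * Real.exp (-c^2/2) := by linarith
    exact this
  · simp only [add_sub_cancel_left]
    have := key_integral n u hu (fun s => (if -c ≤ s then (1:ℝ) else 0) * s)
    rw [this]
    exact ind_id_gphi_integral c
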